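/- Fix an integer d ≥ 7. There exist constants c₀ > 0 (depending only on d) and, for each integer c ≥ c₀, a constant C > 0 (depending only on d and c) such that the following holds for all positive integers k ≤ n with ck dividing dn. Let G be a random (d, dn/(ck))-biregular bipartite multigraph on n left vertices and m' = ck right vertices generated by the configuration model, and fix any set S of k left vertices. Then the probability that some nonempty subset S' ⊆ S satisfies |N(S')| < (2d/3)|S'| is at most C·k^{-d/6}; in particular, since d ≥ 7, this failure probability is o(1/k) as k → ∞. -/

import Mathlib

set_option maxHeartbeats 1000000

open Finset
open scoped Classical


lemma fix_count {N : ℕ} (A : Finset (Fin N)) :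
    ((Finset.univ.filter fun τ : Equiv.Perm (Fin N) => ∀ x ∈ A, τ x = x)).card
      ≤ Nat.factorial (N - A.card) := by
  classical
  set t : Finset (↥(Aᶜ) → Fin N) :=
    (Finset.univ : Finset (↥(Aᶜ) ↪ ↥(Aᶜ))).image (fun e => fun x => (e x : Fin N)) with ht
  have hle : ((Finset.univ.filter fun τ : Equiv.Perm (Fin N) => ∀ x ∈ A, τ x = x)).card
      ≤ t.card := by
    apply Finset.card_le_card_of_injOn (fun τ => fun x : ↥(Aᶜ) => τ x.val)
    · intro τ hτ
      simp only [Finset.mem_coe, Finset.mem_filter] at hτ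
      have hmap : ∀ x : ↥(Aᶜ), τ x.val ∈ Aᶜ := by
        intro x
        by_contra hmem
        have hxA : τ x.val ∈ A := by simpa using hmem
        have := hτ.2 _ hxA
        have hx : (x : Fin N) ∈ A := by
          have : τ ((x : Fin N)) = τ (τ (x : Fin N)) := by rw [this]
          have hxx := τ.injective this
          rw [← hxx] at hxA; exact hxA
        exact absurd hx (Finset.mem_compl.1 x.2)
      refine Finset.mem_image.2 ⟨⟨fun x => ⟨τ x.val, hmap x⟩, ?_⟩, Finset.mem_univ _, rfl⟩
      intro a b hab
      have : τ a.val = τ b.val := Subtype.ext_iff.1 hab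
      exact Subtype.ext (τ.injective this)
    · intro τ₁ h1 τ₂ h2 heq
      simp only [Finset.mem_coe, Finset.mem_filter] at h1 h2
      ext x
      by_cases hx : x ∈ A
      · rw [h1.2 x hx, h2.2 x hx]
      · have hx' : x ∈ Aᶜ := by simpa using hx
        exact congrArg Fin.val (congrFun heq ⟨x, hx'⟩)
  have ht2 : t.card ≤ Nat.factorial (N - A.card) := by
    calc t.card ≤ (Finset.univ : Finset (↥(Aᶜ) ↪ ↥(Aᶜ))).card := Finset.card_image_le
    _ = Fintype.card (↥(Aᶜ) ↪ ↥(Aᶜ)) := Finset.card_univ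
    _ = Nat.factorial (N - A.card) := by
        rw [Fintype.card_embedding_eq]
        simp [Fintype.card_coe, Finset.card_compl, Nat.descFactorial_self]
  exact hle.trans ht2

lemma perm_count {N : ℕ} (A B : Finset (Fin N)) :
    ((Finset.univ.filter fun π : Equiv.Perm (Fin N) => ∀ x ∈ A, π x ∈ B)).card
      ≤ B.card.descFactorial A.card * Nat.factorial (N - A.card) := by
  classical
  set s := (Finset.univ.filter fun π : Equiv.Perm (Fin N) => ∀ x ∈ A, π x ∈ B) with hs
  set ρ : Equiv.Perm (Fin N) → (↥A → Fin N) := fun π => fun x => π x.val with hρ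
  have h1 : s.card ≤ Nat.factorial (N - A.card) * (s.image ρ).card := by
    apply Finset.card_le_mul_card_image
    intro g hg
    obtain ⟨π₀, hπ₀s, hπ₀⟩ := Finset.mem_image.1 hg
    calc (s.filter fun π => ρ π = g).card
        ≤ ((Finset.univ.filter fun τ : Equiv.Perm (Fin N) => ∀ x ∈ A, τ x = x)).card := by
          apply Finset.card_le_card_of_injOn (fun π => π₀⁻¹ * π)
          · intro π hπ
            simp only [Finset.mem_coe, Finset.mem_filter] at hπ ⊢
            refine ⟨Finset.mem_univ _, fun x hx => ?_⟩
            have e1 : π x = π₀ x := congrFun (hπ.2.trans hπ₀.symm) ⟨x, hx⟩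
            simp [Equiv.Perm.mul_apply, e1]
          · intro a _ b _ hab
            exact mul_left_cancel hab
      _ ≤ Nat.factorial (N - A.card) := fix_count A
  have h2 : (s.image ρ).card ≤ B.card.descFactorial A.card := by
    set t : Finset (↥A → Fin N) :=
      (Finset.univ : Finset (↥A ↪ ↥B)).image (fun e => fun x => (e x : Fin N)) with ht
    have hsub : s.image ρ ⊆ t := by
      intro g hg
      obtain ⟨π, hπs, hπ⟩ := Finset.mem_image.1 hg
      simp only [hs, Finset.mem_filter] at hπs
      refine Finset.mem_image.2 ⟨⟨fun x => ⟨g x, ?_⟩, ?_⟩, Finset.mem_univ _, rfl⟩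
      · subst hπ; exact hπs.2 x.val x.2
      · intro a b hab
        have : g a = g b := Subtype.ext_iff.1 hab
        subst hπ
        exact Subtype.ext (π.injective this)
    calc (s.image ρ).card ≤ t.card := Finset.card_le_card hsub
      _ ≤ (Finset.univ : Finset (↥A ↪ ↥B)).card := Finset.card_image_le
      _ = Fintype.card (↥A ↪ ↥B) := Finset.card_univ
      _ = B.card.descFactorial A.card := by
          rw [Fintype.card_embedding_eq]; simp [Fintype.card_coe]
  calc s.card ≤ Nat.factorial (N - A.card) * (s.image ρ).card := h1
    _ ≤ Nat.factorial (N - A.card) * (B.card.descFactorial A.card) :=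
        Nat.mul_le_mul_left _ h2
    _ = B.card.descFactorial A.card * Nat.factorial (N - A.card) := Nat.mul_comm _ _

lemma ratio_le {N a b : ℕ} (hb : b ≤ N) (ha : a ≤ N) :
    (b.descFactorial a * Nat.factorial (N - a) : ℝ) / Nat.factorial N ≤ ((b : ℝ) / N) ^ a := by
  rcases Nat.eq_zero_or_pos N with rfl | hN
  · interval_cases b <;> interval_cases a <;> norm_num
  have hfac : (Nat.factorial (N - a)) * N.descFactorial a = Nat.factorial N :=
    Nat.factorial_mul_descFactorial ha
  have key : (b.descFactorial a : ℝ) ≤ ((b:ℝ)/N)^a * (N.descFactorial a : ℝ) := by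
    rw [Nat.descFactorial_eq_prod_range b a, Nat.descFactorial_eq_prod_range N a,
      Nat.cast_prod, Nat.cast_prod]
    calc (∏ i ∈ Finset.range a, ((b - i : ℕ):ℝ))
        ≤ ∏ i ∈ Finset.range a, ((b:ℝ)/N) * ((N - i : ℕ):ℝ) := by
          apply Finset.prod_le_prod
          · intros; positivity
          · intro i hi
            have hiN : i ≤ N := le_trans (Nat.le_of_lt (Finset.mem_range.1 hi)) ha
            rw [Nat.cast_sub hiN]
            rcases le_or_gt i b with h | h
            · rw [Nat.cast_sub h, div_mul_eq_mul_div, le_div_iff₀ (by exact_mod_cast hN)]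
              have h1 : (b:ℝ) ≤ N := by exact_mod_cast hb
              have h2 : (0:ℝ) ≤ i := by positivity
              nlinarith
            · rw [Nat.sub_eq_zero_of_le h.le]
              have h1 : (i:ℝ) ≤ N := by exact_mod_cast hiN
              have h2 : (0:ℝ) ≤ (b:ℝ)/N := by positivity
              norm_num
              nlinarith
      _ = ((b:ℝ)/N)^a * ∏ i ∈ Finset.range a, ((N-i:ℕ):ℝ) := by
          rw [Finset.prod_mul_distrib, Finset.prod_const, Finset.card_range]
  have hNf : (0:ℝ) < (Nat.factorial N : ℝ) := by exact_mod_cast Nat.factorial_pos N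
  rw [div_le_iff₀ hNf, ← hfac, Nat.cast_mul]
  have hnn : (0:ℝ) ≤ (Nat.factorial (N-a) : ℝ) := by positivity
  calc (b.descFactorial a : ℝ) * (Nat.factorial (N-a) : ℝ)
      ≤ (((b:ℝ)/N)^a * (N.descFactorial a : ℝ)) * (Nat.factorial (N-a):ℝ) :=
        mul_le_mul_of_nonneg_right key hnn
    _ = ((b:ℝ)/N)^a * ((Nat.factorial (N-a):ℝ) * (N.descFactorial a : ℝ)) := by ring

lemma card_slice (q m : ℕ) (hq : 0 < q) (T : Finset ℕ) (hT : T ⊆ Finset.range m) :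
    ((Finset.range (q*m)).filter (fun h => h / q ∈ T)).card = q * T.card := by
  have hset : (Finset.range (q*m)).filter (fun h => h / q ∈ T)
      = T.biUnion (fun v => Finset.Ico (q*v) (q*v+q)) := by
    ext h
    simp only [Finset.mem_filter, Finset.mem_range, Finset.mem_biUnion, Finset.mem_Ico]
    constructor
    · rintro ⟨hlt, hmem⟩
      have h1 : q * (h / q) ≤ h := Nat.mul_div_le h q
      have h2 : h < q * (h / q) + q := by
        conv_lhs => rw [← Nat.div_add_mod h q]
        exact Nat.add_lt_add_left (Nat.mod_lt h hq) _
      exact ⟨h / q, hmem, h1, h2⟩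
    · rintro ⟨v, hv, h1, h2⟩
      have hvm : v < m := Finset.mem_range.1 (hT hv)
      have hdiv : h / q = v := by
        have e1 : v * q ≤ h := by rw [Nat.mul_comm]; omega
        have e2 : h < (v + 1) * q := by rw [Nat.succ_mul, Nat.mul_comm v q]; omega
        exact Nat.div_eq_of_lt_le e1 e2
      constructor
      · have h3 : q * v + q ≤ q * m := by
          rw [← Nat.mul_succ]; exact Nat.mul_le_mul_left q hvm
        omega
      · rw [hdiv]; exact hv
  have hdisj : ∀ a ∈ T, ∀ b ∈ T, a ≠ b →
      Disjoint (Finset.Ico (q*a) (q*a+q)) (Finset.Ico (q*b) (q*b+q)) := by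
    intro a _ b _ hab
    apply Finset.disjoint_left.2
    intro x hxa hxb
    simp only [Finset.mem_Ico] at hxa hxb
    rcases Nat.lt_or_ge a b with h | h
    · have h3 : q * a + q ≤ q * b := by
        rw [← Nat.mul_succ]; exact Nat.mul_le_mul_left q h
      omega
    · have h' : b < a := by omega
      have h3 : q * b + q ≤ q * a := by
        rw [← Nat.mul_succ]; exact Nat.mul_le_mul_left q h'
      omega
  rw [hset, Finset.card_biUnion hdisj]
  have hcard : ∀ v ∈ T, (Finset.Ico (q*v) (q*v+q)).card = q := by
    intro v _; rw [Nat.card_Ico]; omega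
  rw [Finset.sum_congr rfl hcard, Finset.sum_const, smul_eq_mul, mul_comm]

lemma card_fin_filter {N : ℕ} (p : ℕ → Prop) [DecidablePred p] :
    ((Finset.univ : Finset (Fin N)).filter (fun h => p h.val)).card
      = ((Finset.range N).filter p).card := by
  apply Finset.card_bij (fun h _ => h.val)
  · intro a ha
    simp only [Finset.mem_filter, Finset.mem_univ, true_and] at ha
    simp [a.2, ha]
  · intro a _ b _ hab
    exact Fin.ext hab
  · intro b hb
    simp only [Finset.mem_filter, Finset.mem_range] at hb
    exact ⟨⟨b, hb.1⟩, by simp [hb.2], rfl⟩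

lemma fact_lower (s : ℕ) : ((s:ℝ)/3)^s ≤ (Nat.factorial s : ℝ) := by
  induction s with
  | zero => norm_num
  | succ r ih =>
    have key : ((r:ℝ)+1)^r ≤ 3 * (r:ℝ)^r := by
      rcases Nat.eq_zero_or_pos r with rfl | hr
      · norm_num
      · have hr' : (0:ℝ) < r := by exact_mod_cast hr
        have h1 : (r:ℝ) + 1 = r * (1 + 1/r) := by field_simp
        have h2 : (1 + 1/(r:ℝ)) ≤ Real.exp (1/r) := by
          have := Real.add_one_le_exp (1/(r:ℝ)); linarith
        have h3 : ((1:ℝ) + 1/r)^r ≤ Real.exp (1/r) ^ r := by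
          apply pow_le_pow_left₀ (by positivity) h2
        have h4 : Real.exp (1/(r:ℝ)) ^ r = Real.exp 1 := by
          rw [← Real.exp_nat_mul]
          congr 1
          field_simp
        have h5 : Real.exp 1 ≤ 3 := by
          have := Real.exp_one_lt_d9; norm_num at this ⊢; linarith
        calc ((r:ℝ)+1)^r = (r:ℝ)^r * (1+1/r)^r := by rw [h1, mul_pow]
          _ ≤ (r:ℝ)^r * 3 := by
              apply mul_le_mul_of_nonneg_left _ (by positivity)
              calc ((1:ℝ)+1/r)^r ≤ Real.exp (1/r) ^ r := h3
                _ = Real.exp 1 := h4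
                _ ≤ 3 := h5
          _ = 3 * (r:ℝ)^r := by ring
    have hfact : (Nat.factorial (r+1) : ℝ) = ((r:ℝ)+1) * Nat.factorial r := by
      rw [Nat.factorial_succ]; push_cast; ring
    rw [hfact]
    have : (((r:ℝ)+1)/3)^(r+1) = (((r:ℝ)+1)/3) * (((r:ℝ)+1)^r / 3^r) := by
      rw [div_pow, pow_succ]; ring
    push_cast
    rw [this]
    calc (((r:ℝ)+1)/3) * (((r:ℝ)+1)^r / 3^r)
        ≤ (((r:ℝ)+1)/3) * (3 * (r:ℝ)^r / 3^r) := by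
          apply mul_le_mul_of_nonneg_left _ (by positivity)
          gcongr
      _ = ((r:ℝ)+1) * ((r:ℝ)/3)^r := by rw [div_pow]; ring
      _ ≤ ((r:ℝ)+1) * Nat.factorial r := by
          apply mul_le_mul_of_nonneg_left ih (by positivity)

lemma analysis_step (d c k s ts M m : ℕ) (hd : 7 ≤ d)
    (hc : 3^(d+1)*d ≤ c) (hs1 : 1 ≤ s) (hsk : s ≤ k)
    (hts : ts = 2*(d*s)/3) (hM : M = c*k)
    (hm : m = (d+5)/6) :
    (k.choose s : ℝ) * (M.choose ts : ℝ) * ((ts:ℝ)/(M:ℝ))^(d*s)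
      ≤ (1/2:ℝ)^s * ((s:ℝ)^m / (k:ℝ)^m) := by
  -- natural number facts
  have hds7 : 7 * s ≤ d * s := Nat.mul_le_mul_right s hd
  have h3t : 3 * ts ≤ 2 * (d*s) := by
    have := Nat.div_mul_le_self (2*(d*s)) 3; omega
  have hts1 : 1 ≤ ts := by omega
  have htsds : ts ≤ d * s := by omega
  set e := d*s - ts with he
  have he_eq : d*s = ts + e := by omega
  have he2s : 2*s ≤ e := by omega
  have hse : s ≤ e := by omega
  have hdsd : d * 1 ≤ d * s := Nat.mul_le_mul_left d hs1
  set r := e - s with hr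
  have hr_eq : e = s + r := by omega
  have hmr : m ≤ r := by omega
  have hc1 : 1 ≤ c := by
    have h1 : 1 ≤ 3^(d+1) := Nat.one_le_pow _ _ (by norm_num)
    nlinarith
  have hk1 : 1 ≤ k := le_trans hs1 hsk
  -- real positivity
  have hkR : (0:ℝ) < k := by exact_mod_cast hk1
  have hsR : (0:ℝ) < s := by exact_mod_cast hs1
  have htsR : (0:ℝ) < ts := by exact_mod_cast hts1
  have hcR : (0:ℝ) < c := by exact_mod_cast hc1
  have hMR : (0:ℝ) < M := by rw [hM]; push_cast; positivity
  set ε : ℝ := 2*(d:ℝ)/(3*(c:ℝ)) with hε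
  have hεpos : 0 < ε := by rw [hε]; positivity
  -- choose bounds
  have hfs : (0:ℝ) < ((s:ℝ)/3)^s := by positivity
  have P1 : (k.choose s : ℝ) ≤ (k:ℝ)^s * 3^s / (s:ℝ)^s := by
    calc (k.choose s : ℝ) ≤ (k:ℝ)^s / (Nat.factorial s : ℝ) := by
          exact_mod_cast Nat.choose_le_pow_div s k
      _ ≤ (k:ℝ)^s / ((s:ℝ)/3)^s := by
          apply div_le_div_of_nonneg_left (by positivity) hfs (fact_lower s)
      _ = (k:ℝ)^s * 3^s / (s:ℝ)^s := by
          rw [div_pow]; field_simp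
  have hfts : (0:ℝ) < ((ts:ℝ)/3)^ts := by positivity
  have P2 : (M.choose ts : ℝ) ≤ (M:ℝ)^ts * 3^ts / (ts:ℝ)^ts := by
    calc (M.choose ts : ℝ) ≤ (M:ℝ)^ts / (Nat.factorial ts : ℝ) := by
          exact_mod_cast Nat.choose_le_pow_div ts M
      _ ≤ (M:ℝ)^ts / ((ts:ℝ)/3)^ts := by
          apply div_le_div_of_nonneg_left (by positivity) hfts (fact_lower ts)
      _ = (M:ℝ)^ts * 3^ts / (ts:ℝ)^ts := by
          rw [div_pow]; field_simp
  set x : ℝ := (ts:ℝ)/(M:ℝ) with hx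
  have hx0 : 0 ≤ x := by positivity
  have hxle : x ≤ ε * ((s:ℝ)/(k:ℝ)) := by
    have h1 : (3:ℝ) * ((ts:ℕ):ℝ) ≤ 2 * ((d:ℝ)*(s:ℝ)) := by exact_mod_cast h3t
    have hMc : (M:ℝ) = (c:ℝ)*(k:ℝ) := by rw [hM]; push_cast; ring
    rw [hx, hε, hMc, div_le_iff₀ (by positivity)]
    have expand : 2*(d:ℝ)/(3*(c:ℝ)) * ((s:ℝ)/(k:ℝ)) * ((c:ℝ)*(k:ℝ)) = 2*(d:ℝ)*(s:ℝ)/3 := by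
      field_simp
    rw [expand, le_div_iff₀ (by norm_num : (0:ℝ) < 3)]
    nlinarith [h1]
  -- main chain
  have hxds : x^(d*s) = x^ts * x^e := by rw [he_eq, pow_add]
  have key1 : ((M:ℝ)^ts * 3^ts / (ts:ℝ)^ts) * x^ts = 3^ts := by
    rw [hx, div_pow]
    field_simp
  have step1 : (k.choose s : ℝ) * (M.choose ts : ℝ) * x^(d*s)
      ≤ ((k:ℝ)^s * 3^s / (s:ℝ)^s) * 3^ts * x^e := by
    rw [hxds]
    calc (k.choose s : ℝ) * (M.choose ts : ℝ) * (x^ts * x^e)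
        ≤ ((k:ℝ)^s * 3^s / (s:ℝ)^s) * ((M:ℝ)^ts * 3^ts / (ts:ℝ)^ts) * (x^ts * x^e) := by
          apply mul_le_mul_of_nonneg_right _ (by positivity)
          apply mul_le_mul P1 P2 (by positivity) (by positivity)
      _ = ((k:ℝ)^s * 3^s / (s:ℝ)^s) * (((M:ℝ)^ts * 3^ts / (ts:ℝ)^ts) * x^ts) * x^e := by ring
      _ = ((k:ℝ)^s * 3^s / (s:ℝ)^s) * 3^ts * x^e := by rw [key1]
  have hxe : x^e ≤ ε^e * ((s:ℝ)/(k:ℝ))^e := by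
    calc x^e ≤ (ε * ((s:ℝ)/(k:ℝ)))^e := pow_le_pow_left₀ hx0 hxle e
      _ = ε^e * ((s:ℝ)/(k:ℝ))^e := mul_pow _ _ _
  have hske : ((s:ℝ)/(k:ℝ))^e = ((s:ℝ)/(k:ℝ))^s * ((s:ℝ)/(k:ℝ))^r := by
    rw [hr_eq, pow_add]
  have key2 : ((k:ℝ)^s / (s:ℝ)^s) * ((s:ℝ)/(k:ℝ))^s = 1 := by
    rw [div_pow]; field_simp
  have step2 : ((k:ℝ)^s * 3^s / (s:ℝ)^s) * 3^ts * x^e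
      ≤ 3^s * 3^ts * ε^e * ((s:ℝ)/(k:ℝ))^r := by
    calc ((k:ℝ)^s * 3^s / (s:ℝ)^s) * 3^ts * x^e
        ≤ ((k:ℝ)^s * 3^s / (s:ℝ)^s) * 3^ts * (ε^e * (((s:ℝ)/(k:ℝ))^s * ((s:ℝ)/(k:ℝ))^r)) := by
          apply mul_le_mul_of_nonneg_left _ (by positivity)
          rw [← hske]; exact hxe
      _ = (3:ℝ)^s * 3^ts * ε^e * ((s:ℝ)/(k:ℝ))^r * (((k:ℝ)^s / (s:ℝ)^s) * ((s:ℝ)/(k:ℝ))^s) := by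
          ring
      _ = 3^s * 3^ts * ε^e * ((s:ℝ)/(k:ℝ))^r := by rw [key2, mul_one]
  -- bound the epsilon/3 powers
  have hε1 : ε ≤ 1 := by
    rw [hε, div_le_one (by positivity)]
    have hdc : (d:ℕ) ≤ c := by
      have h1 : 1 ≤ 3^(d+1) := Nat.one_le_pow (d+1) 3 (by norm_num)
      calc d = 1 * d := (Nat.one_mul d).symm
        _ ≤ 3^(d+1) * d := Nat.mul_le_mul_right d h1
        _ ≤ c := hc
    have hdcR : (d:ℝ) ≤ c := by exact_mod_cast hdc
    linarith
  have hεe : ε^e ≤ ε^(2*s) := pow_le_pow_of_le_one hεpos.le hε1 (by omega)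
  have h3ts : (3:ℝ)^ts ≤ 3^(d*s) := pow_le_pow_right₀ (by norm_num) htsds
  have hbase : (3:ℝ)^(d+1) * ε^2 ≤ 1/2 := by
    have hcb : ((3:ℝ)^(d+1) * d) ≤ c := by exact_mod_cast hc
    have hεb : ε ≤ 2/(3:ℝ)^(d+2) := by
      rw [hε]
      rw [div_le_div_iff₀ (by positivity) (by positivity)]
      have hd1 : (1:ℝ) ≤ d := by exact_mod_cast le_trans (by norm_num) hd
      have h32 : (3:ℝ)^(d+2) = 3 * 3^(d+1) := by rw [pow_succ]; ring
      nlinarith [pow_pos (show (0:ℝ) < 3 by norm_num) (d+1)]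
    have h8 : (8:ℝ) ≤ 3^(d+3) := by
      calc (8:ℝ) ≤ 3^3 := by norm_num
        _ ≤ 3^(d+3) := pow_le_pow_right₀ (by norm_num) (by omega)
    have hp1 : (0:ℝ) < 3^(d+1) := by positivity
    have hp2 : (0:ℝ) < 3^(d+2) := by positivity
    have h33 : (3:ℝ)^(d+3) = 3^(d+1) * 9 := by rw [pow_succ, pow_succ]; ring
    have h34 : (3:ℝ)^(d+2) * 3^(d+2) = 3^(d+1) * 3^(d+3) := by
      rw [← pow_add, ← pow_add]; congr 1; omega
    calc (3:ℝ)^(d+1) * ε^2 ≤ 3^(d+1) * (2/(3:ℝ)^(d+2))^2 := by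
          apply mul_le_mul_of_nonneg_left _ hp1.le
          exact pow_le_pow_left₀ hεpos.le hεb 2
      _ = 4 * 3^(d+1) / (3^(d+2)*3^(d+2)) := by rw [div_pow]; ring
      _ = 4 / 3^(d+3) := by rw [h34]; field_simp
      _ ≤ 1/2 := by
          rw [div_le_div_iff₀ (by positivity) (by norm_num)]
          linarith
  have hsk1 : (s:ℝ)/(k:ℝ) ≤ 1 := by
    rw [div_le_one hkR]; exact_mod_cast hsk
  have hskr : ((s:ℝ)/(k:ℝ))^r ≤ ((s:ℝ)/(k:ℝ))^m :=
    pow_le_pow_of_le_one (by positivity) hsk1 hmr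
  have step3 : (3:ℝ)^s * 3^ts * ε^e * ((s:ℝ)/(k:ℝ))^r
      ≤ (1/2:ℝ)^s * ((s:ℝ)/(k:ℝ))^m := by
    have hA : (3:ℝ)^s * 3^ts * ε^e ≤ (1/2:ℝ)^s := by
      calc (3:ℝ)^s * 3^ts * ε^e ≤ 3^s * 3^(d*s) * ε^(2*s) := by
            apply mul_le_mul (mul_le_mul_of_nonneg_left h3ts (by positivity)) hεe
              (by positivity) (by positivity)
        _ = ((3:ℝ)^(d+1) * ε^2)^s := by
            have hexp : (d+1)*s = s + d*s := by ring
            rw [mul_pow, ← pow_mul, ← pow_mul, hexp, pow_add]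
        _ ≤ (1/2:ℝ)^s := pow_le_pow_left₀ (by positivity) hbase s
    calc (3:ℝ)^s * 3^ts * ε^e * ((s:ℝ)/(k:ℝ))^r
        ≤ (3:ℝ)^s * 3^ts * ε^e * ((s:ℝ)/(k:ℝ))^m := by
          apply mul_le_mul_of_nonneg_left hskr (by positivity)
      _ ≤ (1/2:ℝ)^s * ((s:ℝ)/(k:ℝ))^m := by
          apply mul_le_mul_of_nonneg_right hA (by positivity)
  calc (k.choose s : ℝ) * (M.choose ts : ℝ) * x^(d*s)
      ≤ ((k:ℝ)^s * 3^s / (s:ℝ)^s) * 3^ts * x^e := step1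
    _ ≤ 3^s * 3^ts * ε^e * ((s:ℝ)/(k:ℝ))^r := step2
    _ ≤ (1/2:ℝ)^s * ((s:ℝ)/(k:ℝ))^m := step3
    _ = (1/2:ℝ)^s * ((s:ℝ)^m / (k:ℝ)^m) := by
        rw [show ((s:ℝ)/(k:ℝ))^m = (s:ℝ)^m/(k:ℝ)^m from div_pow _ _ _]

/- STATEMENT 0: For every integer `d ≥ 7` there is a constant `c₀ > 0` and, for each
integer `c ≥ c₀`, a constant `C > 0` such that for all `0 < k ≤ n` with `c*k ∣ d*n`,
for a random `(d, dn/(ck))`-biregular bipartite multigraph generated by the configuration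
model (a uniformly random matching, i.e. permutation, of the `d*n` left half-edges with the
`d*n` right half-edges, where left half-edge `h` belongs to left vertex `h / d` and right
half-edge `h'` belongs to right vertex `h' / (d*n/(c*k))`), and for any fixed set `S` of `k`
left vertices, the probability that some nonempty `S' ⊆ S` has `|N(S')| < (2d/3)|S'|` is at
most `C * k^(-d/6)`. -/

open Classical in
theorem stmt0 (d : ℕ) (hd : 7 ≤ d) :
    ∃ c₀ : ℕ, 0 < c₀ ∧
      ∀ c : ℕ, c₀ ≤ c →
        ∃ C : ℝ, 0 < C ∧
          ∀ n k : ℕ, 0 < k → k ≤ n → c * k ∣ d * n →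
            ∀ S : Finset ℕ, S ⊆ Finset.range n → S.card = k →
              (((Finset.univ : Finset (Equiv.Perm (Fin (d * n)))).filter
                  (fun π => ∃ S' ⊆ S, S'.Nonempty ∧
                    ((((Finset.univ : Finset (Fin (d * n))).filter
                          (fun h => h.val / d ∈ S')).image
                        (fun h => (π h).val / (d * n / (c * k)))).card : ℝ)
                      < 2 * d / 3 * S'.card)).card : ℝ)
                / (Fintype.card (Equiv.Perm (Fin (d * n))) : ℝ)
              ≤ C * (k : ℝ) ^ (-(d : ℝ) / 6) := by
  have hd0 : 0 < d := by omega
  refine ⟨3^(d+1)*d, by positivity, fun c hc => ?_⟩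
  set m : ℕ := (d+5)/6 with hm
  have hsummable : Summable (fun s : ℕ => (s:ℝ)^m * (1/2:ℝ)^s) := by
    have := summable_pow_mul_geometric_of_norm_lt_one (R := ℝ) m
      (r := (1/2:ℝ)) (by rw [Real.norm_eq_abs]; rw [abs_of_pos] <;> norm_num)
    exact this
  set C : ℝ := 1 + ∑' s : ℕ, (s:ℝ)^m * (1/2:ℝ)^s with hC
  have htsum_nonneg : 0 ≤ ∑' s : ℕ, (s:ℝ)^m * (1/2:ℝ)^s :=
    tsum_nonneg (fun s => by positivity)
  refine ⟨C, by rw [hC]; linarith, ?_⟩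
  intro n k hk hkn hdvd S hSn hSk
  -- setup
  have hn : 0 < n := lt_of_lt_of_le hk hkn
  have hc1 : 1 ≤ c := by
    have h1 : 1 ≤ 3^(d+1) := Nat.one_le_pow _ _ (by norm_num)
    have := hc; nlinarith
  have hdc : d ≤ c := by
    have h1 : 1 ≤ 3^(d+1) := Nat.one_le_pow _ _ (by norm_num)
    calc d = 1 * d := (Nat.one_mul d).symm
      _ ≤ 3^(d+1) * d := Nat.mul_le_mul_right d h1
      _ ≤ c := hc
  set N : ℕ := d * n with hN
  set M : ℕ := c * k with hM
  set D : ℕ := d * n / (c * k) with hD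
  have hDM : D * M = N := Nat.div_mul_cancel hdvd
  have hNpos : 0 < N := by rw [hN]; positivity
  have hMpos : 0 < M := by rw [hM]; positivity
  have hDpos : 0 < D := by
    rcases Nat.eq_zero_or_pos D with h0 | h
    · rw [h0, Nat.zero_mul] at hDM; omega
    · exact h
  set t : ℕ → ℕ := fun s => 2*(d*s)/3 with ht
  set F : Finset ℕ → Finset ℕ → Finset (Equiv.Perm (Fin N)) := fun S' T =>
    Finset.univ.filter (fun π => ∀ h : Fin N, h.val / d ∈ S' → (π h).val / D ∈ T) with hF
  have htM : ∀ s, s ≤ k → t s ≤ M := by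
    intro s hsk
    have h1 : t s ≤ d * s := by
      have h2 : 2*(d*s) ≤ (d*s)*3 := by omega
      calc t s = 2*(d*s)/3 := rfl
        _ ≤ (d*s)*3/3 := Nat.div_le_div_right h2
        _ = d*s := Nat.mul_div_cancel _ (by norm_num)
    calc t s ≤ d*s := h1
      _ ≤ c*k := Nat.mul_le_mul hdc hsk
  -- inclusion into union
  have hsub : (Finset.univ.filter (fun π : Equiv.Perm (Fin N) => ∃ S' ⊆ S, S'.Nonempty ∧
        ((((Finset.univ : Finset (Fin N)).filter (fun h => h.val / d ∈ S')).image
            (fun h => (π h).val / D)).card : ℝ) < 2 * d / 3 * S'.card))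
      ⊆ (Finset.Icc 1 k).biUnion (fun s => (S.powersetCard s).biUnion (fun S' =>
          ((Finset.range M).powersetCard (t s)).biUnion (fun T => F S' T))) := by
    intro π hπ
    simp only [Finset.mem_filter, Finset.mem_univ, true_and] at hπ
    obtain ⟨S', hS'S, hne, hlt⟩ := hπ
    have hs1 : 1 ≤ S'.card := Finset.card_pos.2 hne
    have hsk : S'.card ≤ k := by rw [← hSk]; exact Finset.card_le_card hS'S
    set img := ((Finset.univ : Finset (Fin N)).filter (fun h => h.val / d ∈ S')).image
        (fun h => (π h).val / D) with himg
    have hnat : img.card * 3 < 2*(d*S'.card) := by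
      have hreal : (img.card : ℝ) * 3 < 2*((d:ℝ)*(S'.card:ℝ)) := by nlinarith [hlt]
      exact_mod_cast hreal
    have himgcard : img.card ≤ t S'.card :=
      (Nat.le_div_iff_mul_le (by norm_num)).2 (by omega)
    have himgM : img ⊆ Finset.range M := by
      intro x hx
      obtain ⟨h, _, rfl⟩ := Finset.mem_image.1 hx
      apply Finset.mem_range.2
      apply (Nat.div_lt_iff_lt_mul hDpos).2
      calc ((π h : Fin N) : ℕ) < N := (π h).2
        _ = M * D := by rw [← hDM]; ring
    obtain ⟨T, hsubT, hTM, hTcard⟩ :=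
      Finset.exists_subsuperset_card_eq himgM himgcard
        (by simpa using htM S'.card hsk)
    apply Finset.mem_biUnion.2
    refine ⟨S'.card, Finset.mem_Icc.2 ⟨hs1, hsk⟩, ?_⟩
    apply Finset.mem_biUnion.2
    refine ⟨S', Finset.mem_powersetCard.2 ⟨hS'S, rfl⟩, ?_⟩
    apply Finset.mem_biUnion.2
    refine ⟨T, Finset.mem_powersetCard.2 ⟨hTM, hTcard⟩, ?_⟩
    simp only [hF, Finset.mem_filter, Finset.mem_univ, true_and]
    intro h hh
    exact hsubT (Finset.mem_image_of_mem _ (Finset.mem_filter.2 ⟨Finset.mem_univ _, hh⟩))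
  -- counting each F S' T
  have hcount : ∀ s ∈ Finset.Icc 1 k, ∀ S' ∈ S.powersetCard s,
      ∀ T ∈ (Finset.range M).powersetCard (t s),
      (F S' T).card ≤ (D * t s).descFactorial (d*s) * Nat.factorial (N - d*s) := by
    intro s hs S' hS' T hT
    rw [Finset.mem_powersetCard] at hS' hT
    have hA : ((Finset.univ : Finset (Fin N)).filter (fun h => h.val / d ∈ S')).card = d * s := by
      rw [card_fin_filter (fun x => x / d ∈ S'), hN,
        card_slice d n hd0 S' (hS'.1.trans hSn), hS'.2]
    have hB : ((Finset.univ : Finset (Fin N)).filter (fun h => h.val / D ∈ T)).card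
        = D * t s := by
      rw [card_fin_filter (fun x => x / D ∈ T)]
      rw [show Finset.range N = Finset.range (D * M) from by rw [hDM]]
      rw [card_slice D M hDpos T hT.1, hT.2]
    have hFeq : F S' T = Finset.univ.filter (fun π : Equiv.Perm (Fin N) =>
        ∀ x ∈ (Finset.univ : Finset (Fin N)).filter (fun h => h.val / d ∈ S'),
          π x ∈ (Finset.univ : Finset (Fin N)).filter (fun h => h.val / D ∈ T)) := by
      ext π
      simp only [hF, Finset.mem_filter, Finset.mem_univ, true_and]
    rw [hFeq]
    calc (Finset.univ.filter (fun π : Equiv.Perm (Fin N) =>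
        ∀ x ∈ (Finset.univ : Finset (Fin N)).filter (fun h => h.val / d ∈ S'),
          π x ∈ (Finset.univ : Finset (Fin N)).filter (fun h => h.val / D ∈ T))).card
        ≤ (((Finset.univ : Finset (Fin N)).filter (fun h => h.val / D ∈ T)).card).descFactorial
            (((Finset.univ : Finset (Fin N)).filter (fun h => h.val / d ∈ S')).card)
          * Nat.factorial (N - ((Finset.univ : Finset (Fin N)).filter
              (fun h => h.val / d ∈ S')).card) := perm_count _ _
      _ = (D * t s).descFactorial (d*s) * Nat.factorial (N - d*s) := by rw [hA, hB]
  -- union bound on cardinality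
  have hkey : (Finset.univ.filter (fun π : Equiv.Perm (Fin N) => ∃ S' ⊆ S, S'.Nonempty ∧
        ((((Finset.univ : Finset (Fin N)).filter (fun h => h.val / d ∈ S')).image
            (fun h => (π h).val / D)).card : ℝ) < 2 * d / 3 * S'.card)).card
      ≤ ∑ s ∈ Finset.Icc 1 k, (k.choose s) * ((M.choose (t s))
          * ((D * t s).descFactorial (d*s) * Nat.factorial (N - d*s))) := by
    calc _ ≤ ((Finset.Icc 1 k).biUnion (fun s => (S.powersetCard s).biUnion (fun S' =>
          ((Finset.range M).powersetCard (t s)).biUnion (fun T => F S' T)))).card :=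
        Finset.card_le_card hsub
      _ ≤ ∑ s ∈ Finset.Icc 1 k, ((S.powersetCard s).biUnion (fun S' =>
            ((Finset.range M).powersetCard (t s)).biUnion (fun T => F S' T))).card :=
        Finset.card_biUnion_le
      _ ≤ ∑ s ∈ Finset.Icc 1 k, (k.choose s) * ((M.choose (t s))
          * ((D * t s).descFactorial (d*s) * Nat.factorial (N - d*s))) := by
        apply Finset.sum_le_sum
        intro s hs
        calc ((S.powersetCard s).biUnion (fun S' =>
              ((Finset.range M).powersetCard (t s)).biUnion (fun T => F S' T))).card
            ≤ ∑ S' ∈ S.powersetCard s, (((Finset.range M).powersetCard (t s)).biUnion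
                (fun T => F S' T)).card := Finset.card_biUnion_le
          _ ≤ ∑ S' ∈ S.powersetCard s, ((M.choose (t s))
              * ((D * t s).descFactorial (d*s) * Nat.factorial (N - d*s))) := by
            apply Finset.sum_le_sum
            intro S' hS'
            calc (((Finset.range M).powersetCard (t s)).biUnion (fun T => F S' T)).card
                ≤ ∑ T ∈ (Finset.range M).powersetCard (t s), (F S' T).card :=
                  Finset.card_biUnion_le
              _ ≤ ∑ T ∈ (Finset.range M).powersetCard (t s),
                    ((D * t s).descFactorial (d*s) * Nat.factorial (N - d*s)) :=
                  Finset.sum_le_sum (fun T hT => hcount s hs S' hS' T hT)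
              _ = ((Finset.range M).powersetCard (t s)).card
                    * ((D * t s).descFactorial (d*s) * Nat.factorial (N - d*s)) := by
                  rw [Finset.sum_const, smul_eq_mul]
              _ = (M.choose (t s)) * ((D * t s).descFactorial (d*s)
                    * Nat.factorial (N - d*s)) := by
                  rw [Finset.card_powersetCard, Finset.card_range]
          _ = (S.powersetCard s).card * ((M.choose (t s))
              * ((D * t s).descFactorial (d*s) * Nat.factorial (N - d*s))) := by
            rw [Finset.sum_const, smul_eq_mul]
          _ = (k.choose s) * ((M.choose (t s))
              * ((D * t s).descFactorial (d*s) * Nat.factorial (N - d*s))) := by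
            rw [Finset.card_powersetCard, hSk]
  -- move to reals
  have hperm : (Fintype.card (Equiv.Perm (Fin N)) : ℝ) = (Nat.factorial N : ℝ) := by
    rw [Fintype.card_perm, Fintype.card_fin]
  have hNfacpos : (0:ℝ) < (Nat.factorial N : ℝ) := by exact_mod_cast Nat.factorial_pos N
  have hstep : ∀ s ∈ Finset.Icc 1 k,
      ((k.choose s : ℝ) * ((M.choose (t s) : ℝ)
          * ((D * t s).descFactorial (d*s) * Nat.factorial (N - d*s) : ℝ))) / (Nat.factorial N : ℝ)
        ≤ (1/2:ℝ)^s * ((s:ℝ)^m / (k:ℝ)^m) := by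
    intro s hs
    rw [Finset.mem_Icc] at hs
    have hbN : D * t s ≤ N := by
      calc D * t s ≤ D * M := Nat.mul_le_mul_left D (htM s hs.2)
        _ = N := hDM
    have haN : d * s ≤ N := by
      rw [hN]; exact Nat.mul_le_mul_left d (le_trans hs.2 hkn)
    have hratio := ratio_le (N := N) (a := d*s) (b := D * t s) hbN haN
    have hbM : ((D * t s : ℕ) : ℝ) / (N:ℝ) = ((t s : ℕ):ℝ)/(M:ℝ) := by
      rw [← hDM]
      push_cast
      have hDR : (0:ℝ) < (D:ℝ) := by exact_mod_cast hDpos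
      have hMR : (0:ℝ) < (M:ℝ) := by exact_mod_cast hMpos
      field_simp
    calc ((k.choose s : ℝ) * ((M.choose (t s) : ℝ)
          * ((D * t s).descFactorial (d*s) * Nat.factorial (N - d*s) : ℝ))) / (Nat.factorial N : ℝ)
        = (k.choose s : ℝ) * (M.choose (t s) : ℝ)
          * (((D * t s).descFactorial (d*s) * Nat.factorial (N - d*s) : ℝ)
              / (Nat.factorial N : ℝ)) := by ring
      _ ≤ (k.choose s : ℝ) * (M.choose (t s) : ℝ) * (((D * t s : ℕ):ℝ)/(N:ℝ))^(d*s) := by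
          apply mul_le_mul_of_nonneg_left _ (by positivity)
          exact_mod_cast hratio
      _ = (k.choose s : ℝ) * (M.choose (t s) : ℝ) * (((t s:ℕ):ℝ)/(M:ℝ))^(d*s) := by
          rw [hbM]
      _ ≤ (1/2:ℝ)^s * ((s:ℝ)^m / (k:ℝ)^m) :=
          analysis_step d c k s (t s) M m hd hc hs.1 hs.2 rfl hM hm
  -- final bound
  have hkR : (0:ℝ) < (k:ℝ) := by exact_mod_cast hk
  have hk1R : (1:ℝ) ≤ (k:ℝ) := by exact_mod_cast hk
  have hfinal : (((Finset.univ.filter (fun π : Equiv.Perm (Fin N) => ∃ S' ⊆ S, S'.Nonempty ∧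
        ((((Finset.univ : Finset (Fin N)).filter (fun h => h.val / d ∈ S')).image
            (fun h => (π h).val / D)).card : ℝ) < 2 * d / 3 * S'.card)).card : ℝ))
      / (Fintype.card (Equiv.Perm (Fin N)) : ℝ) ≤ C * (k : ℝ) ^ (-(d : ℝ) / 6) := by
    rw [hperm]
    calc _ ≤ ((∑ s ∈ Finset.Icc 1 k, (k.choose s) * ((M.choose (t s))
          * ((D * t s).descFactorial (d*s) * Nat.factorial (N - d*s))) : ℕ) : ℝ)
            / (Nat.factorial N : ℝ) := by
          have hkey' : ((Finset.univ.filter (fun π : Equiv.Perm (Fin N) => ∃ S' ⊆ S, S'.Nonempty ∧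
                ((((Finset.univ : Finset (Fin N)).filter (fun h => h.val / d ∈ S')).image
                    (fun h => (π h).val / D)).card : ℝ) < 2 * d / 3 * S'.card)).card : ℝ)
              ≤ ((∑ s ∈ Finset.Icc 1 k, (k.choose s) * ((M.choose (t s))
                * ((D * t s).descFactorial (d*s) * Nat.factorial (N - d*s))) : ℕ) : ℝ) :=
            Nat.cast_le.mpr hkey
          gcongr
      _ = ∑ s ∈ Finset.Icc 1 k, ((k.choose s : ℝ) * ((M.choose (t s) : ℝ)
          * ((D * t s).descFactorial (d*s) * Nat.factorial (N - d*s) : ℝ)))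
            / (Nat.factorial N : ℝ) := by
          rw [← Finset.sum_div]
          congr 1
          push_cast
          rfl
      _ ≤ ∑ s ∈ Finset.Icc 1 k, (1/2:ℝ)^s * ((s:ℝ)^m / (k:ℝ)^m) :=
          Finset.sum_le_sum hstep
      _ = (∑ s ∈ Finset.Icc 1 k, (s:ℝ)^m * (1/2:ℝ)^s) / (k:ℝ)^m := by
          rw [Finset.sum_div]
          apply Finset.sum_congr rfl
          intro s _
          ring
      _ ≤ C / (k:ℝ)^m := by
          gcongr
          calc (∑ s ∈ Finset.Icc 1 k, (s:ℝ)^m * (1/2:ℝ)^s)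
              ≤ ∑' s : ℕ, (s:ℝ)^m * (1/2:ℝ)^s :=
                Summable.sum_le_tsum _ (fun i _ => by positivity) hsummable
            _ ≤ C := by rw [hC]; linarith
      _ ≤ C * (k : ℝ) ^ (-(d : ℝ) / 6) := by
          rw [div_eq_mul_inv]
          apply mul_le_mul_of_nonneg_left _ (by rw [hC]; linarith)
          have h1 : ((k:ℝ)^m)⁻¹ = (k:ℝ) ^ (-(m:ℝ)) := by
            rw [← Real.rpow_natCast (k:ℝ) m, ← Real.rpow_neg (by positivity)]
          rw [h1]
          apply Real.rpow_le_rpow_of_exponent_le hk1R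
          have h6m : d ≤ 6 * m := by omega
          have : (d:ℝ) ≤ 6*(m:ℝ) := by exact_mod_cast h6m
          linarith
  exact hfinal
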